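/- arXiv:1703.07620 — 6 statements merged into one kernel-verified Lean document; each statement's English description precedes it below -/
import Mathlib

section
/- If (a,b,c) is a positive integer solution of x^2 + y^2 + z^2 = 3xyz with c ≥ a and c ≥ b, then 3bc - a ≥ 2a and 3ac - b ≥ 2b. -/
/-- For a positive Markov triple (a,b,c) with c maximal,
3bc - a ≥ 2a and 3ac - b ≥ 2b. -/
theorem markov_mutation_ge (a b c : ℤ) (ha : 0 < a) (hb : 0 < b) (hc : 0 < c)
    (hca : a ≤ c) (hcb : b ≤ c)
    (h : a ^ 2 + b ^ 2 + c ^ 2 = 3 * a * b * c) :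
    3 * b * c - a ≥ 2 * a ∧ 3 * a * c - b ≥ 2 * b := by
  constructor <;> nlinarith [mul_le_mul_of_nonneg_left hca hb.le, mul_le_mul_of_nonneg_left hcb ha.le]
end

section
/- For any positive integer solution (a1,a2,a3) of x^2+y^2+z^2=3xyz with a3 ≥ a1 and a3 ≥ a2, the inequality sqrt((3 a3)^2 - 4) > |3 a3 - 2 a1 / a2| holds in the reals. -/
/-- For a positive Markov triple (a1,a2,a3) with a3 maximal,
sqrt((3 a3)^2 - 4) > |3 a3 - 2 a1 / a2| over the reals. -/
theorem markov_slope_bound (a1 a2 a3 : ℤ) (h1 : 0 < a1) (h2 : 0 < a2) (h3 : 0 < a3)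
    (h31 : a1 ≤ a3) (h32 : a2 ≤ a3)
    (h : a1 ^ 2 + a2 ^ 2 + a3 ^ 2 = 3 * a1 * a2 * a3) :
    Real.sqrt ((3 * (a3 : ℝ)) ^ 2 - 4) > |3 * (a3 : ℝ) - 2 * (a1 : ℝ) / (a2 : ℝ)| := by
  have h1' : (1 : ℝ) ≤ (a1 : ℝ) := by exact_mod_cast h1
  have h2' : (1 : ℝ) ≤ (a2 : ℝ) := by exact_mod_cast h2
  have h3' : (1 : ℝ) ≤ (a3 : ℝ) := by exact_mod_cast h3
  have h2ne : (a2 : ℝ) ≠ 0 := by positivity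
  have h' : (a1 : ℝ) ^ 2 + (a2 : ℝ) ^ 2 + (a3 : ℝ) ^ 2 = 3 * a1 * a2 * a3 := by
    exact_mod_cast h
  rw [gt_iff_lt, ← Real.sqrt_sq (abs_nonneg _)]
  apply Real.sqrt_lt_sqrt (by positivity)
  rw [sq_abs]
  have key : (3 * (a3 : ℝ)) ^ 2 - 4 - (3 * (a3 : ℝ) - 2 * a1 / a2) ^ 2
      = 4 * a3 ^ 2 / a2 ^ 2 := by
    field_simp
    linear_combination (-4 : ℝ) * h'
  have pos : (0:ℝ) < 4 * a3 ^ 2 / a2 ^ 2 := by positivity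
  linarith [key]
end

section
/- For any positive integer solution (a1,a2,a3) of x^2+y^2+z^2=3xyz with a3 maximal, setting s = 3 a3, the real number s - a1/a2 lies strictly between (s - sqrt(s^2-4))/2 and (s + sqrt(s^2-4))/2. -/
/-- For a positive Markov triple (a1,a2,a3) with a3 maximal and s = 3 a3,
s - a1/a2 lies strictly between (s - sqrt(s^2-4))/2 and (s + sqrt(s^2-4))/2. -/
theorem markov_slope_between (a1 a2 a3 : ℤ) (h1 : 0 < a1) (h2 : 0 < a2) (h3 : 0 < a3)
    (h31 : a1 ≤ a3) (h32 : a2 ≤ a3)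
    (h : a1 ^ 2 + a2 ^ 2 + a3 ^ 2 = 3 * a1 * a2 * a3) :
    ((3 * (a3 : ℝ)) - Real.sqrt ((3 * (a3 : ℝ)) ^ 2 - 4)) / 2
      < 3 * (a3 : ℝ) - (a1 : ℝ) / (a2 : ℝ) ∧
    3 * (a3 : ℝ) - (a1 : ℝ) / (a2 : ℝ)
      < ((3 * (a3 : ℝ)) + Real.sqrt ((3 * (a3 : ℝ)) ^ 2 - 4)) / 2 := by
  set s : ℝ := 3 * (a3 : ℝ) with hs
  have ha1 : (0 : ℝ) < (a1 : ℝ) := by exact_mod_cast h1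
  have ha2 : (0 : ℝ) < (a2 : ℝ) := by exact_mod_cast h2
  have ha3 : (1 : ℝ) ≤ (a3 : ℝ) := by exact_mod_cast h3
  have hsge : (3 : ℝ) ≤ s := by simp [hs]; nlinarith
  have hnn : (0 : ℝ) ≤ s ^ 2 - 4 := by nlinarith
  set d : ℝ := Real.sqrt (s ^ 2 - 4) with hd
  have hd0 : 0 ≤ d := Real.sqrt_nonneg _
  have hd2 : d ^ 2 = s ^ 2 - 4 := Real.sq_sqrt hnn
  have hm : (a1 : ℝ) ^ 2 + (a2 : ℝ) ^ 2 + (a3 : ℝ) ^ 2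
      = 3 * (a1 : ℝ) * (a2 : ℝ) * (a3 : ℝ) := by exact_mod_cast h
  have keyZ : (2 * (a1 : ℝ) - s * (a2 : ℝ)) ^ 2 < (s ^ 2 - 4) * (a2 : ℝ) ^ 2 := by
    have h3r : (0 : ℝ) < (a3 : ℝ) := by exact_mod_cast h3
    rw [hs]; nlinarith [hm, sq_nonneg ((a3 : ℝ)), mul_pos ha1 ha2]
  have heq : (2 * ((a1 : ℝ) / (a2 : ℝ)) - s) * (a2 : ℝ) = 2 * (a1 : ℝ) - s * (a2 : ℝ) := by
    field_simp
  have key : (2 * ((a1 : ℝ) / (a2 : ℝ)) - s) ^ 2 < s ^ 2 - 4 := by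
    have h2sq : (0 : ℝ) < (a2 : ℝ) ^ 2 := by positivity
    have : ((2 * ((a1 : ℝ) / (a2 : ℝ)) - s)) ^ 2 * (a2 : ℝ) ^ 2 < (s ^ 2 - 4) * (a2 : ℝ) ^ 2 := by
      calc ((2 * ((a1 : ℝ) / (a2 : ℝ)) - s)) ^ 2 * (a2 : ℝ) ^ 2
          = ((2 * ((a1 : ℝ) / (a2 : ℝ)) - s) * (a2 : ℝ)) ^ 2 := by ring
        _ = (2 * (a1 : ℝ) - s * (a2 : ℝ)) ^ 2 := by rw [heq]
        _ < (s ^ 2 - 4) * (a2 : ℝ) ^ 2 := keyZ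
    exact lt_of_mul_lt_mul_right (by linarith) (le_of_lt h2sq)
  constructor
  · nlinarith [key, hd0, hd2]
  · nlinarith [key, hd0, hd2]
end

section
/- For any positive integer solution (a1,a2,a3) of x^2+y^2+z^2=3xyz with a3 maximal, setting s = 3 a3, the real number a1/(s·a1 - a2) lies strictly between (s - sqrt(s^2-4))/2 and (s + sqrt(s^2-4))/2. -/
/-- For a positive Markov triple (a1,a2,a3) with a3 maximal and s = 3 a3,
a1/(s·a1 - a2) lies strictly between (s - sqrt(s^2-4))/2 and (s + sqrt(s^2-4))/2. -/
theorem markov_slope_between' (a1 a2 a3 : ℤ) (h1 : 0 < a1) (h2 : 0 < a2) (h3 : 0 < a3)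
    (h31 : a1 ≤ a3) (h32 : a2 ≤ a3)
    (h : a1 ^ 2 + a2 ^ 2 + a3 ^ 2 = 3 * a1 * a2 * a3) :
    ((3 * (a3 : ℝ)) - Real.sqrt ((3 * (a3 : ℝ)) ^ 2 - 4)) / 2
      < (a1 : ℝ) / (3 * (a3 : ℝ) * (a1 : ℝ) - (a2 : ℝ)) ∧
    (a1 : ℝ) / (3 * (a3 : ℝ) * (a1 : ℝ) - (a2 : ℝ))
      < ((3 * (a3 : ℝ)) + Real.sqrt ((3 * (a3 : ℝ)) ^ 2 - 4)) / 2 := by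
  have hM : (a1 : ℝ) ^ 2 + a2 ^ 2 + a3 ^ 2 = 3 * a1 * a2 * a3 := by exact_mod_cast h
  have hDZ : (0 : ℤ) < 3 * a3 * a1 - a2 := by nlinarith
  have hD : (0 : ℝ) < 3 * (a3 : ℝ) * a1 - a2 := by exact_mod_cast hDZ
  have ha3 : (1 : ℝ) ≤ (a3 : ℝ) := by exact_mod_cast h3
  have hs4 : (0 : ℝ) ≤ (3 * (a3 : ℝ)) ^ 2 - 4 := by nlinarith
  set r := Real.sqrt ((3 * (a3 : ℝ)) ^ 2 - 4) with hrdef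
  have hr : r ^ 2 = (3 * (a3 : ℝ)) ^ 2 - 4 := Real.sq_sqrt hs4
  have hr0 : 0 ≤ r := Real.sqrt_nonneg _
  set D : ℝ := 3 * (a3 : ℝ) * a1 - a2 with hDdef
  have hDne : D ≠ 0 := ne_of_gt hD
  have heq : (2 * ((a1 : ℝ) / D) - 3 * a3) ^ 2
      = (3 * (a3 : ℝ)) ^ 2 - 4 - (2 * a3 / D) ^ 2 := by
    field_simp
    ring_nf
    nlinarith [hM, sq_nonneg D]
  have ha3pos : (0 : ℝ) < (a3 : ℝ) := by exact_mod_cast h3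
  have key : (2 * ((a1 : ℝ) / D) - 3 * a3) ^ 2 < r ^ 2 := by
    rw [hr, heq]
    have : 0 < (2 * (a3 : ℝ) / D) ^ 2 := by positivity
    linarith
  have habs : |2 * ((a1 : ℝ) / D) - 3 * a3| < r := abs_lt_of_sq_lt_sq key hr0
  rw [abs_lt] at habs
  constructor <;> [linarith [habs.1]; linarith [habs.2]]
end

section
/- Let (a,b,c) be a positive integer solution of x^2+y^2+z^2=3xyz with c ≥ a, c ≥ b, and (a,b,c) ≠ (1,1,1). Then 3ab - c < c, i.e., mutating at the maximal entry strictly decreases it. -/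
/-- For a positive Markov triple (a,b,c) with c maximal and (a,b,c) ≠ (1,1,1),
mutating at the maximal entry strictly decreases it: 3ab - c < c. -/
theorem markov_descent (a b c : ℤ) (ha : 0 < a) (hb : 0 < b) (hc : 0 < c)
    (hca : a ≤ c) (hcb : b ≤ c) (hne : (a, b, c) ≠ (1, 1, 1))
    (h : a ^ 2 + b ^ 2 + c ^ 2 = 3 * a * b * c) :
    3 * a * b - c < c := by
  by_cases hab : a = 1 ∧ b = 1
  · obtain ⟨ha1, hb1⟩ := hab
    subst ha1; subst hb1
    have hc1 : c ≠ 1 := by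
      intro hc1; exact hne (by simp [hc1])
    have hfac : (c - 1) * (c - 2) = 0 := by ring_nf; linarith [h]
    rcases mul_eq_zero.1 hfac with h1 | h2
    · exact absurd (by linarith) hc1
    · have : c = 2 := by linarith
      subst this; norm_num
  · by_contra hcon
    push_neg at hcon
    have hc' : c ≤ 3 * a * b - c := by linarith
    have hprod : c * (3 * a * b - c) = a ^ 2 + b ^ 2 := by ring_nf; linarith [h]
    have h1 : 0 ≤ (c - a) * ((3 * a * b - c) - a) :=
      mul_nonneg (by linarith) (by linarith)
    have h2 : 0 ≤ (c - b) * ((3 * a * b - c) - b) :=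
      mul_nonneg (by linarith) (by linarith)
    have hcase : 2 ≤ a ∨ 2 ≤ b := by
      rcases eq_or_lt_of_le (show (0:ℤ) + 1 ≤ a from ha) with h' | h'
      · rcases eq_or_lt_of_le (show (0:ℤ) + 1 ≤ b from hb) with h'' | h''
        · exact absurd ⟨h'.symm, h''.symm⟩ hab
        · exact Or.inr h''
      · exact Or.inl h'
    rcases hcase with h2a | h2b
    · nlinarith [h1, h2, hprod, mul_pos ha hb, sq_nonneg (a - b), mul_le_mul_of_nonneg_left hcb ha.le]
    · nlinarith [h1, h2, hprod, mul_pos ha hb, sq_nonneg (a - b), mul_le_mul_of_nonneg_left hca hb.le]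
end

section
/- Every positive integer solution of x^2+y^2+z^2 = 3xyz can be obtained from (1,1,1) by a finite sequence of moves, each of which replaces one entry a of the triple (a,b,c) by 3bc - a (where b, c are the other two entries) or permutes the entries. -/
/-- One elementary move on triples: a Vieta involution in some coordinate,
or a transposition of two coordinates. -/
def MarkovStep : ℤ × ℤ × ℤ → ℤ × ℤ × ℤ → Prop := fun p q =>
  match p with
  | (a, b, c) =>
      q = (3 * b * c - a, b, c) ∨
      q = (a, 3 * a * c - b, c) ∨
      q = (a, b, 3 * a * b - c) ∨
      q = (b, a, c) ∨
      q = (a, c, b)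

lemma reach_swap12 {a b c : ℤ} (h : Relation.ReflTransGen MarkovStep (1,1,1) (a,b,c)) :
    Relation.ReflTransGen MarkovStep (1,1,1) (b,a,c) :=
  h.tail (Or.inr (Or.inr (Or.inr (Or.inl rfl))))

lemma reach_swap23 {a b c : ℤ} (h : Relation.ReflTransGen MarkovStep (1,1,1) (a,b,c)) :
    Relation.ReflTransGen MarkovStep (1,1,1) (a,c,b) :=
  h.tail (Or.inr (Or.inr (Or.inr (Or.inr rfl))))

set_option maxHeartbeats 1000000 in
lemma key : ∀ n : ℕ, ∀ a b c : ℤ, 0 < a → 0 < b → 0 < c →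
    a ^ 2 + b ^ 2 + c ^ 2 = 3 * a * b * c → a + b + c ≤ (n : ℤ) →
    Relation.ReflTransGen MarkovStep (1,1,1) (a,b,c) := by
  intro n
  induction n using Nat.strong_induction_on with
  | _ n ih =>
    have sorted : ∀ a b c : ℤ, 0 < c → c ≤ b → b ≤ a →
        a ^ 2 + b ^ 2 + c ^ 2 = 3 * a * b * c → a + b + c ≤ (n : ℤ) →
        Relation.ReflTransGen MarkovStep (1,1,1) (a,b,c) := by
      intro a b c hc hcb hba h hn
      have ha : 0 < a := lt_of_lt_of_le hc (hcb.trans hba)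
      by_cases h1 : a = 1
      · have hb1 : b = 1 := le_antisymm (h1 ▸ hba) (hcb.trans' hc)
        have hc1 : c = 1 := le_antisymm (hcb.trans (h1 ▸ hba)) hc
        subst h1 hb1 hc1; exact Relation.ReflTransGen.refl
      · have h2 : 2 ≤ a := by omega
        set a' := 3 * b * c - a with ha'def
        have ha'pos : 0 < a' := by
          nlinarith [mul_pos (lt_of_lt_of_le hc hcb) (lt_of_lt_of_le hc hcb),
            mul_pos hc hc, sq_nonneg (b-c)]
        have ha'lt : a' < a := by
          nlinarith [sq_nonneg (a-b), sq_nonneg (b-c), sq_nonneg (a-c), mul_pos hc hc,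
            sq_nonneg (a*c - b), sq_nonneg (b*c - a),
            mul_pos (lt_of_lt_of_le hc hcb) hc]
        have heq' : a' ^ 2 + b ^ 2 + c ^ 2 = 3 * a' * b * c := by
          rw [ha'def]; linear_combination h
        have hn' : a' + b + c ≤ ((n - 1 : ℕ) : ℤ) := by
          have h1n : 1 ≤ n := by by_contra hh; omega
          omega
        have hr : Relation.ReflTransGen MarkovStep (1,1,1) (a', b, c) :=
          ih (n-1) (by omega) a' b c ha'pos (lt_of_lt_of_le hc hcb) hc heq' hn'
        have hA : a = 3 * b * c - a' := by omega
        exact hr.tail (Or.inl (by rw [hA]))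
    intro a b c ha hb hc h hn
    rcases le_total a b with hab | hab <;> rcases le_total b c with hbc | hbc <;>
      rcases le_total a c with hac | hac
    · exact reach_swap12 (reach_swap23 (reach_swap12
        (sorted c b a ha hab hbc (by linear_combination h) (by linarith))))
    · exact reach_swap12 (reach_swap23 (reach_swap12
        (sorted c b a ha hab hbc (by linear_combination h) (by linarith))))
    · exact reach_swap12 (reach_swap23
        (sorted b c a ha hac hbc (by linear_combination h) (by linarith)))
    · exact reach_swap12
        (sorted b a c hc hac hab (by linear_combination h) (by linarith))
    · exact reach_swap23 (reach_swap12
        (sorted c a b hb hab hac (by linear_combination h) (by linarith)))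
    · exact reach_swap23
        (sorted a c b hb hbc hac (by linear_combination h) (by linarith))
    · exact sorted a b c hc hbc hab h hn
    · exact sorted a b c hc hbc hab h hn

/-- Every positive integer solution of x^2+y^2+z^2 = 3xyz is obtained from
(1,1,1) by a finite sequence of Vieta moves and permutations. -/
theorem markov_reachable (a b c : ℤ) (ha : 0 < a) (hb : 0 < b) (hc : 0 < c)
    (h : a ^ 2 + b ^ 2 + c ^ 2 = 3 * a * b * c) :
    Relation.ReflTransGen MarkovStep (1, 1, 1) (a, b, c) := by
  exact key (a + b + c).toNat a b c ha hb hc h (by omega)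
end
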